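/- Let K be an algebraically closed field of characteristic 0, let J be the catalecticant of binary quartics as above, and let λ ∈ K, λ ≠ 0. Fix μ ∈ K with μ² = −λ. Then for each sign ε ∈ {+1,−1} and all u,v ∈ K, the quartic u·(x⁴ + λy⁴) + v·(xy(x² + εμ y²)) satisfies J = 0; i.e., the two lines in P⁴ joining [x⁴+λy⁴] to [xy(x²±μy²)] are contained in the cubic hypersurface J = 0. -/
import Mathlib


/-- For λ ≠ 0 and μ² = −λ, the lines joining [x⁴+λy⁴] to [xy(x²±μy²)] lie in
the catalecticant cubic J = 0: the quartic u(x⁴+λy⁴) + v·xy(x²+εμy²), which has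
coefficients (u, v, 0, εμv, uλ), satisfies J = 0 for all u,v. -/
theorem secant_lines_in_catalecticant {K : Type*} [Field K] [IsAlgClosed K]
    [CharZero K] (lam : K) (hlam : lam ≠ 0) (μ : K) (hμ : μ ^ 2 = -lam)
    (ε : K) (hε : ε = 1 ∨ ε = -1) (u v : K) :
    let a₀ := u
    let a₁ := v
    let a₂ : K := 0
    let a₃ := ε * μ * v
    let a₄ := u * lam
    72 * a₀ * a₂ * a₄ - 27 * a₀ * a₃ ^ 2 - 27 * a₁ ^ 2 * a₄ +
      9 * a₁ * a₂ * a₃ - 2 * a₂ ^ 3 = 0 := by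
  have hε2 : ε ^ 2 = 1 := by rcases hε with h | h <;> simp [h]
  simp only
  have : ε ^ 2 * μ ^ 2 = -lam := by rw [hε2, hμ]; ring
  linear_combination (-27 * u * v ^ 2) * this
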